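/- arXiv:1901.00059 — 2 statements merged into one kernel-verified Lean document; each statement's English description precedes it below -/
import Mathlib

section
/- Let $X \in \mathbb{R}^{n \times m}$ with singular values $\lambda_1 \ge \cdots \ge \lambda_m \ge 0$. For any matrices $W \in \mathbb{R}^{n \times k}$ and $Z \in \mathbb{R}^{m \times k}$ (so that $WZ^T$ has rank at most $k$), it holds that $\|X - WZ^T\|_F^2 \ge \sum_{i=k+1}^m \lambda_i^2$. -/
open Matrix Finset

section EYMAux

/-- helper for swapping a double sum against a product -/
private lemma eym_swap_helper {n d : ℕ} (f : Fin d → Fin n → ℝ) (x : Fin n → ℝ) (c : Fin d → ℝ) :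
    ∑ a, x a * ∑ t, c t * f t a = ∑ t, c t * (∑ a, x a * f t a) := by
  simp only [Finset.mul_sum]
  rw [Finset.sum_comm]
  apply Finset.sum_congr rfl; intro t _
  apply Finset.sum_congr rfl; intro a _
  ring

/-- Parseval identity for an orthonormal family, in raw-sum form. -/
private lemma eym_parseval {n d : ℕ} (f : Fin d → Fin n → ℝ)
    (hf : ∀ s t, ∑ a, f s a * f t a = if s = t then (1:ℝ) else 0)
    (c : Fin d → ℝ) :
    ∑ a, (∑ t, c t * f t a) ^ 2 = ∑ t, c t ^ 2 := by
  have h : ∀ a : Fin n, (∑ t, c t * f t a) ^ 2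
      = ∑ t, c t * ∑ s, c s * (f t a * f s a) := by
    intro a
    rw [sq, Finset.sum_mul]
    apply Finset.sum_congr rfl; intro t _
    rw [Finset.mul_sum, Finset.mul_sum]
    apply Finset.sum_congr rfl; intro s _
    ring
  rw [Finset.sum_congr rfl (fun a _ => h a)]
  rw [Finset.sum_comm]
  apply Finset.sum_congr rfl; intro t _
  have h1 : ∑ i, ∑ s, c s * (f t i * f s i) = ∑ s, c s * ∑ i, f t i * f s i := by
    rw [Finset.sum_comm]
    apply Finset.sum_congr rfl; intro s _
    rw [Finset.mul_sum]
  rw [← Finset.mul_sum, h1]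
  simp only [hf]
  simp [sq]

/-- Expansion of the squared distance to a combination of an orthonormal family. -/
private lemma eym_expand {n d : ℕ} (f : Fin d → Fin n → ℝ)
    (hf : ∀ s t, ∑ a, f s a * f t a = if s = t then (1:ℝ) else 0)
    (x : Fin n → ℝ) (c : Fin d → ℝ) :
    ∑ a, (x a - ∑ t, c t * f t a) ^ 2
      = ∑ a, x a ^ 2
        - 2 * ∑ t, c t * (∑ a, x a * f t a)
        + ∑ t, c t ^ 2 := by
  have hcross : ∑ a, x a * ∑ t, c t * f t a = ∑ t, c t * (∑ a, x a * f t a) :=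
    eym_swap_helper f x c
  have hsq : ∑ a, (∑ t, c t * f t a) ^ 2 = ∑ t, c t ^ 2 := eym_parseval f hf c
  have e1 : ∀ a : Fin n, (x a - ∑ t, c t * f t a) ^ 2
      = x a ^ 2 - 2 * (x a * ∑ t, c t * f t a) + (∑ t, c t * f t a) ^ 2 := by
    intro a; ring
  simp only [e1]
  rw [Finset.sum_add_distrib, Finset.sum_sub_distrib, hsq, ← Finset.mul_sum, hcross]

/-- Key inequality: subtracting any combination of an orthonormal family loses
at least the Bessel part. -/
private lemma eym_key_ineq {n d : ℕ} (f : Fin d → Fin n → ℝ)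
    (hf : ∀ s t, ∑ a, f s a * f t a = if s = t then (1:ℝ) else 0)
    (x : Fin n → ℝ) (c : Fin d → ℝ) :
    ∑ a, x a ^ 2 - ∑ t, (∑ a, x a * f t a) ^ 2
      ≤ ∑ a, (x a - ∑ t, c t * f t a) ^ 2 := by
  rw [eym_expand f hf x c]
  have hterm : ∀ t, 2 * (c t * (∑ a, x a * f t a)) - c t ^ 2
      ≤ (∑ a, x a * f t a) ^ 2 := by
    intro t; nlinarith [sq_nonneg (∑ a, x a * f t a - c t)]
  have h2 : 2 * ∑ t, c t * (∑ a, x a * f t a) - ∑ t, c t ^ 2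
      ≤ ∑ t, (∑ a, x a * f t a) ^ 2 := by
    rw [Finset.mul_sum, ← Finset.sum_sub_distrib]
    exact Finset.sum_le_sum fun t _ => hterm t
  linarith

/-- Bessel's inequality in raw-sum form. -/
private lemma eym_bessel {n d : ℕ} (f : Fin d → Fin n → ℝ)
    (hf : ∀ s t, ∑ a, f s a * f t a = if s = t then (1:ℝ) else 0)
    (x : Fin n → ℝ) :
    ∑ t, (∑ a, x a * f t a) ^ 2 ≤ ∑ a, x a ^ 2 := by
  have h := eym_expand f hf x (fun t => ∑ a, x a * f t a)
  have h0 : (0:ℝ) ≤ ∑ a, (x a - ∑ t, (∑ b, x b * f t b) * f t a) ^ 2 :=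
    Finset.sum_nonneg fun a _ => sq_nonneg _
  have h1 : ∑ t, (∑ a, x a * f t a) * (∑ a, x a * f t a)
      = ∑ t, (∑ a, x a * f t a) ^ 2 := by
    exact Finset.sum_congr rfl fun t _ => (sq _).symm
  rw [h] at h0
  have h2 : ∑ t, (fun t => ∑ a, x a * f t a) t * (∑ a, x a * f t a)
      = ∑ t, (∑ a, x a * f t a) ^ 2 := h1
  rw [h2] at h0
  have h3 : ∑ t, ((fun t => ∑ a, x a * f t a) t) ^ 2
      = ∑ t, (∑ a, x a * f t a) ^ 2 := rfl
  rw [h3] at h0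
  linarith

set_option maxHeartbeats 1000000 in
/-- An orthonormal family of size at most `k` spanning the column space of `W`. -/
private lemma eym_exists_onb {n k : ℕ} (W : Matrix (Fin n) (Fin k) ℝ) :
    ∃ d : ℕ, d ≤ k ∧ ∃ f : Fin d → Fin n → ℝ,
      (∀ s t, ∑ a, f s a * f t a = if s = t then (1:ℝ) else 0) ∧
      ∀ z : Fin k → ℝ, ∃ c : Fin d → ℝ, W *ᵥ z = fun a => ∑ t, c t * f t a := by
  classical
  set cols : Fin k → EuclideanSpace ℝ (Fin n) := fun t => WithLp.toLp 2 (fun a => W a t) with hcols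
  set S : Submodule ℝ (EuclideanSpace ℝ (Fin n)) := Submodule.span ℝ (Set.range cols) with hS
  have hd : Module.finrank ℝ S ≤ k := by
    have := finrank_range_le_card (R := ℝ) cols
    simpa [Set.finrank, Fintype.card_fin] using this
  let b := stdOrthonormalBasis ℝ S
  refine ⟨Module.finrank ℝ S, hd, fun t a => (b t : EuclideanSpace ℝ (Fin n)) a, ?_, ?_⟩
  · intro s t
    have h := b.orthonormal
    rw [orthonormal_iff_ite] at h
    have h2 := h s t
    rw [Submodule.coe_inner] at h2
    simpa [PiLp.inner_apply, RCLike.inner_apply, mul_comm] using h2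
  · intro z
    have hmem : (WithLp.toLp 2 (W *ᵥ z) : EuclideanSpace ℝ (Fin n)) ∈ S := by
      have heq : (WithLp.toLp 2 (W *ᵥ z) : EuclideanSpace ℝ (Fin n)) = ∑ t, z t • cols t := by
        ext a
        simp [cols, Matrix.mulVec, dotProduct, mul_comm]
      rw [heq]
      exact Submodule.sum_mem _ fun t _ =>
        Submodule.smul_mem _ _ (Submodule.subset_span (Set.mem_range_self t))
    refine ⟨fun t => b.repr ⟨WithLp.toLp 2 (W *ᵥ z), hmem⟩ t, ?_⟩
    have hrepr := b.sum_repr ⟨WithLp.toLp 2 (W *ᵥ z), hmem⟩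
    have hval := congrArg (Subtype.val) hrepr
    funext a
    have h3 := congrArg (fun v : EuclideanSpace ℝ (Fin n) => v a) hval
    simp only [Submodule.coe_sum, Submodule.coe_smul] at h3
    simpa using h3.symm

private lemma eym_card_filter_lt {m k : ℕ} (hk : k ≤ m) :
    (Finset.univ.filter (fun i : Fin m => (i : ℕ) < k)).card = k := by
  have h : Finset.univ.filter (fun i : Fin m => (i : ℕ) < k)
      = (Finset.univ : Finset (Fin k)).map ⟨Fin.castLE hk, Fin.castLE_injective hk⟩ := by
    ext i
    simp only [Finset.mem_filter, Finset.mem_univ, true_and, Finset.mem_map,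
      Function.Embedding.coeFn_mk]
    constructor
    · intro h
      exact ⟨⟨i, h⟩, rfl⟩
    · rintro ⟨j, rfl⟩
      exact j.isLt
  rw [h, Finset.card_map, Finset.card_univ, Fintype.card_fin]

/-- The combinatorial weight inequality. -/
private lemma eym_weight {m k : ℕ} (hk : k ≤ m) (lam g : Fin m → ℝ)
    (hnn : ∀ i, 0 ≤ lam i)
    (hmono : ∀ i j : Fin m, i ≤ j → lam j ≤ lam i)
    (hg0 : ∀ i, 0 ≤ g i) (hg1 : ∀ i, g i ≤ 1) (hgs : ∑ i, g i ≤ (k : ℝ)) :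
    ∑ i ∈ Finset.univ.filter (fun i : Fin m => k ≤ (i : ℕ)), lam i ^ 2
      ≤ ∑ i, lam i ^ 2 * (1 - g i) := by
  by_cases hkm : k < m
  · set c : ℝ := lam ⟨k, hkm⟩ ^ 2 with hc
    have hc0 : 0 ≤ c := sq_nonneg _
    set A := Finset.univ.filter (fun i : Fin m => k ≤ (i : ℕ)) with hA
    set B := Finset.univ.filter (fun i : Fin m => (i : ℕ) < k) with hB
    have hsplit : ∑ i, lam i ^ 2 * (1 - g i)
        = ∑ i ∈ A, lam i ^ 2 * (1 - g i) + ∑ i ∈ B, lam i ^ 2 * (1 - g i) := by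
      rw [hA, hB, ← Finset.sum_filter_add_sum_filter_not Finset.univ
        (fun i : Fin m => k ≤ (i : ℕ))]
      congr 1
      apply Finset.sum_congr _ fun _ _ => rfl
      ext i; simp [Nat.not_le, Nat.lt_irrefl]
    have hAle : ∀ i ∈ A, lam i ^ 2 ≤ c := by
      intro i hi
      rw [hA, Finset.mem_filter] at hi
      have : lam i ≤ lam ⟨k, hkm⟩ := hmono _ _ (by exact hi.2)
      nlinarith [hnn i, hnn ⟨k, hkm⟩]
    have hBge : ∀ i ∈ B, c ≤ lam i ^ 2 := by
      intro i hi
      rw [hB, Finset.mem_filter] at hi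
      have : lam ⟨k, hkm⟩ ≤ lam i := hmono _ _ (le_of_lt hi.2)
      nlinarith [hnn i, hnn ⟨k, hkm⟩]
    have hAg : ∑ i ∈ A, lam i ^ 2 * g i ≤ c * ∑ i ∈ A, g i := by
      rw [Finset.mul_sum]
      exact Finset.sum_le_sum fun i hi =>
        mul_le_mul_of_nonneg_right (hAle i hi) (hg0 i)
    have hBg : c * ∑ i ∈ B, (1 - g i) ≤ ∑ i ∈ B, lam i ^ 2 * (1 - g i) := by
      rw [Finset.mul_sum]
      exact Finset.sum_le_sum fun i hi =>
        mul_le_mul_of_nonneg_right (hBge i hi) (by linarith [hg1 i])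
    have hcardB : ∑ i ∈ B, (1:ℝ) = (k : ℝ) := by
      rw [Finset.sum_const, hB, eym_card_filter_lt hk]; simp
    have hgsplit : ∑ i ∈ A, g i + ∑ i ∈ B, g i = ∑ i, g i := by
      rw [hA, hB, ← Finset.sum_filter_add_sum_filter_not Finset.univ
        (fun i : Fin m => k ≤ (i : ℕ))]
      congr 1
      apply Finset.sum_congr _ fun _ _ => rfl
      ext i; simp [Nat.not_le]
    have hBsum : ∑ i ∈ B, (1 - g i) = (k:ℝ) - ∑ i ∈ B, g i := by
      rw [Finset.sum_sub_distrib, hcardB]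
    have hAgle : ∑ i ∈ A, g i ≤ (k:ℝ) - ∑ i ∈ B, g i := by
      linarith [hgsplit, hgs]
    have key : ∑ i ∈ A, lam i ^ 2 * g i ≤ ∑ i ∈ B, lam i ^ 2 * (1 - g i) := by
      calc ∑ i ∈ A, lam i ^ 2 * g i ≤ c * ∑ i ∈ A, g i := hAg
        _ ≤ c * ((k:ℝ) - ∑ i ∈ B, g i) := mul_le_mul_of_nonneg_left hAgle hc0
        _ = c * ∑ i ∈ B, (1 - g i) := by rw [hBsum]
        _ ≤ ∑ i ∈ B, lam i ^ 2 * (1 - g i) := hBg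
    have hAexp : ∑ i ∈ A, lam i ^ 2 * (1 - g i)
        = ∑ i ∈ A, lam i ^ 2 - ∑ i ∈ A, lam i ^ 2 * g i := by
      rw [← Finset.sum_sub_distrib]
      exact Finset.sum_congr rfl fun i _ => by ring
    rw [hsplit, hAexp]
    linarith
  · have hkm' : m ≤ k := le_of_not_gt hkm
    have hempty : Finset.univ.filter (fun i : Fin m => k ≤ (i : ℕ)) = ∅ := by
      ext i
      simp only [Finset.mem_filter, Finset.mem_univ, true_and, Finset.notMem_empty,
        iff_false]
      exact Nat.not_le.mpr (lt_of_lt_of_le i.isLt hkm')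
    rw [hempty, Finset.sum_empty]
    exact Finset.sum_nonneg fun i _ =>
      mul_nonneg (sq_nonneg _) (by linarith [hg1 i])

/-- Squared Frobenius norm through the SVD. -/
private lemma eym_Xsq {n m : ℕ}
    (X : Matrix (Fin n) (Fin m) ℝ) (U : Matrix (Fin n) (Fin m) ℝ)
    (V : Matrix (Fin m) (Fin m) ℝ) (lam : Fin m → ℝ)
    (hU : Uᵀ * U = 1) (hV : Vᵀ * V = 1)
    (hX : X = U * Matrix.diagonal lam * Vᵀ) :
    ∑ j, ∑ a, X a j ^ 2 = ∑ i, lam i ^ 2 := by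
  have h1 : ∑ j, ∑ a, X a j ^ 2 = Matrix.trace (Xᵀ * X) := by
    simp [Matrix.trace, Matrix.diag, Matrix.mul_apply, sq]
  rw [h1, hX]
  have h2 : (U * Matrix.diagonal lam * Vᵀ)ᵀ * (U * Matrix.diagonal lam * Vᵀ)
      = V * Matrix.diagonal (fun i => lam i * lam i) * Vᵀ := by
    rw [Matrix.transpose_mul, Matrix.transpose_mul, Matrix.transpose_transpose,
      Matrix.diagonal_transpose]
    calc V * (Matrix.diagonal lam * Uᵀ) * (U * Matrix.diagonal lam * Vᵀ)
        = V * (Matrix.diagonal lam * ((Uᵀ * U) * (Matrix.diagonal lam * Vᵀ))) := by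
          simp only [Matrix.mul_assoc]
      _ = V * Matrix.diagonal (fun i => lam i * lam i) * Vᵀ := by
          rw [hU, Matrix.one_mul, ← Matrix.diagonal_mul_diagonal]
          simp only [Matrix.mul_assoc]
  rw [h2, Matrix.mul_assoc, Matrix.trace_mul_comm, Matrix.mul_assoc, hV, Matrix.mul_one,
    Matrix.trace_diagonal]
  simp [sq]

/-- Inner products of the columns of `X` with a fixed vector, through the SVD. -/
private lemma eym_ip {n m : ℕ}
    (X : Matrix (Fin n) (Fin m) ℝ) (U : Matrix (Fin n) (Fin m) ℝ)
    (V : Matrix (Fin m) (Fin m) ℝ) (lam : Fin m → ℝ)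
    (hX : X = U * Matrix.diagonal lam * Vᵀ) (fv : Fin n → ℝ)
    (hVorth : ∀ s t, ∑ j, V j s * V j t = if s = t then (1:ℝ) else 0) :
    ∑ j, (∑ a, X a j * fv a) ^ 2
      = ∑ i, lam i ^ 2 * (∑ a, U a i * fv a) ^ 2 := by
  have hcol : ∀ j, ∑ a, X a j * fv a
      = ∑ i, (lam i * (∑ a, U a i * fv a)) * V j i := by
    intro j
    have hX2 : ∀ a, X a j = ∑ i, (U a i * lam i) * V j i := by
      intro a
      rw [hX, Matrix.mul_apply]
      apply Finset.sum_congr rfl; intro i _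
      rw [Matrix.mul_diagonal]
      rfl
    simp only [hX2]
    have hs : ∀ x, (∑ i, U x i * lam i * V j i) * fv x
        = ∑ i, (U x i * fv x) * (lam i * V j i) := by
      intro x; rw [Finset.sum_mul]; exact Finset.sum_congr rfl fun i _ => by ring
    simp only [hs]
    rw [Finset.sum_comm]
    apply Finset.sum_congr rfl; intro i _
    rw [← Finset.sum_mul]
    ring
  simp only [hcol]
  rw [eym_parseval (fun i j => V j i) (by intro s t; simpa using hVorth s t)
    (fun i => lam i * (∑ a, U a i * fv a))]
  apply Finset.sum_congr rfl; intro i _; ring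

end EYMAux

/-- Inequality part of Eckart-Young-Mirsky in Frobenius norm: for any rank-`k`
factorization `W Zᵀ`, the squared Frobenius error is at least the sum of the
squares of the last `m - k` singular values of `X`. -/
theorem eckart_young_mirsky_lower {n m k : ℕ} (hk : k ≤ m)
    (X : Matrix (Fin n) (Fin m) ℝ) (U : Matrix (Fin n) (Fin m) ℝ)
    (V : Matrix (Fin m) (Fin m) ℝ) (lam : Fin m → ℝ)
    (hU : Uᵀ * U = 1) (hV : Vᵀ * V = 1)
    (hlam_nonneg : ∀ i, 0 ≤ lam i)
    (hlam_mono : ∀ i j : Fin m, i ≤ j → lam j ≤ lam i)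
    (hX : X = U * Matrix.diagonal lam * Vᵀ)
    (W : Matrix (Fin n) (Fin k) ℝ) (Z : Matrix (Fin m) (Fin k) ℝ) :
    (∑ i ∈ Finset.univ.filter (fun i : Fin m => k ≤ (i : ℕ)), lam i ^ 2)
      ≤ ∑ i, ∑ j, (X - W * Zᵀ) i j ^ 2 := by
  classical
  obtain ⟨d, hd, f, hf, hspan⟩ := eym_exists_onb W
  have hUorth : ∀ i j : Fin m, ∑ a, U a i * U a j = if i = j then (1:ℝ) else 0 := by
    intro i j
    have h := congrFun (congrFun hU i) j
    simpa [Matrix.mul_apply, Matrix.transpose_apply, Matrix.one_apply] using h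
  have hVorth : ∀ s t : Fin m, ∑ j, V j s * V j t = if s = t then (1:ℝ) else 0 := by
    intro s t
    have h := congrFun (congrFun hV s) t
    simpa [Matrix.mul_apply, Matrix.transpose_apply, Matrix.one_apply] using h
  -- coefficients expressing the columns of W * Zᵀ in the orthonormal family
  have hcol : ∀ j : Fin m, ∃ c : Fin d → ℝ, ∀ a, (W * Zᵀ) a j = ∑ t, c t * f t a := by
    intro j
    obtain ⟨c, hcc⟩ := hspan (fun t => Z j t)
    refine ⟨c, fun a => ?_⟩
    have h1 := congrFun hcc a
    have h2 : (W * Zᵀ) a j = (W *ᵥ fun t => Z j t) a := by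
      simp [Matrix.mul_apply, Matrix.mulVec, dotProduct, Matrix.transpose_apply]
    rw [h2, h1]
  choose c hc using hcol
  -- the weights g i
  have hg0 : ∀ i : Fin m, (0:ℝ) ≤ ∑ t, (∑ a, U a i * f t a) ^ 2 :=
    fun i => Finset.sum_nonneg fun t _ => sq_nonneg _
  have hg1 : ∀ i : Fin m, ∑ t, (∑ a, U a i * f t a) ^ 2 ≤ 1 := by
    intro i
    have hb := eym_bessel f hf (fun a => U a i)
    have hUi : ∑ a, U a i ^ 2 = 1 := by
      have h := hUorth i i
      simp only [sq]
      simpa using h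
    calc ∑ t, (∑ a, U a i * f t a) ^ 2 ≤ ∑ a, U a i ^ 2 := hb
      _ = 1 := hUi
  have hgs : ∑ i : Fin m, ∑ t, (∑ a, U a i * f t a) ^ 2 ≤ (k : ℝ) := by
    have h1 : ∀ t : Fin d, ∑ i : Fin m, (∑ a, U a i * f t a) ^ 2 ≤ 1 := by
      intro t
      have hb := eym_bessel (fun i a => U a i) hUorth (f t)
      have hft : ∑ a, f t a ^ 2 = 1 := by
        have h := hf t t
        simp only [sq]
        simpa using h
      calc ∑ i : Fin m, (∑ a, U a i * f t a) ^ 2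
          = ∑ i : Fin m, (∑ a, f t a * U a i) ^ 2 := by
            apply Finset.sum_congr rfl; intro i _
            congr 1
            exact Finset.sum_congr rfl fun a _ => by ring
        _ ≤ ∑ a, f t a ^ 2 := hb
        _ = 1 := hft
    calc ∑ i : Fin m, ∑ t, (∑ a, U a i * f t a) ^ 2
        = ∑ t, ∑ i : Fin m, (∑ a, U a i * f t a) ^ 2 := Finset.sum_comm
      _ ≤ ∑ _t : Fin d, (1:ℝ) := Finset.sum_le_sum fun t _ => h1 t
      _ = (d : ℝ) := by simp
      _ ≤ (k : ℝ) := by exact_mod_cast hd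
  -- per-column inequality
  have step1 : ∀ j : Fin m, ∑ a, X a j ^ 2 - ∑ t, (∑ a, X a j * f t a) ^ 2
      ≤ ∑ a, ((X - W * Zᵀ) a j) ^ 2 := by
    intro j
    have hkey := eym_key_ineq f hf (fun a => X a j) (c j)
    have heq : ∀ a, (X - W * Zᵀ) a j = X a j - ∑ t, c j t * f t a := by
      intro a; rw [Matrix.sub_apply, hc j a]
    calc ∑ a, X a j ^ 2 - ∑ t, (∑ a, X a j * f t a) ^ 2
        ≤ ∑ a, (X a j - ∑ t, c j t * f t a) ^ 2 := hkey
      _ = ∑ a, ((X - W * Zᵀ) a j) ^ 2 := by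
          apply Finset.sum_congr rfl; intro a _; rw [heq a]
  have total : ∑ j, ∑ a, X a j ^ 2 - ∑ j, ∑ t, (∑ a, X a j * f t a) ^ 2
      ≤ ∑ j, ∑ a, ((X - W * Zᵀ) a j) ^ 2 := by
    rw [← Finset.sum_sub_distrib]
    exact Finset.sum_le_sum fun j _ => step1 j
  have hXsq : ∑ j, ∑ a, X a j ^ 2 = ∑ i, lam i ^ 2 := eym_Xsq X U V lam hU hV hX
  have hip : ∑ j, ∑ t, (∑ a, X a j * f t a) ^ 2
      = ∑ i, lam i ^ 2 * ∑ t, (∑ a, U a i * f t a) ^ 2 := by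
    rw [Finset.sum_comm]
    have h1 : ∀ t : Fin d, ∑ j, (∑ a, X a j * f t a) ^ 2
        = ∑ i, lam i ^ 2 * (∑ a, U a i * f t a) ^ 2 :=
      fun t => eym_ip X U V lam hX (f t) hVorth
    rw [Finset.sum_congr rfl fun t _ => h1 t, Finset.sum_comm]
    apply Finset.sum_congr rfl; intro i _
    rw [← Finset.mul_sum]
  have hgoal : ∑ i, ∑ j, (X - W * Zᵀ) i j ^ 2 = ∑ j, ∑ a, ((X - W * Zᵀ) a j) ^ 2 :=
    Finset.sum_comm
  rw [hgoal]
  have hweight := eym_weight hk lam (fun i => ∑ t, (∑ a, U a i * f t a) ^ 2)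
    hlam_nonneg hlam_mono hg0 hg1 hgs
  have hfinal : ∑ i, lam i ^ 2 * (1 - ∑ t, (∑ a, U a i * f t a) ^ 2)
      = ∑ i, lam i ^ 2 - ∑ i, lam i ^ 2 * ∑ t, (∑ a, U a i * f t a) ^ 2 := by
    rw [← Finset.sum_sub_distrib]
    exact Finset.sum_congr rfl fun i _ => by ring
  linarith [hweight, total, hXsq, hip, hfinal]
end

section
/- Let $V \in \mathbb{R}^{m \times k}$ have orthonormal columns and let $E$ satisfy $\|\epsilon E\|_{op} \le c < 1/2$, and set $V^\epsilon = V + \epsilon E$. Let $x \in \mathbb{R}^m$ and $\hat{w} = (V^{\epsilon T}V^\epsilon)^{-1}V^{\epsilon T}x$ be the least-squares coefficient vector. Then $\|V^\epsilon \hat{w}\|_2 \le \|x\|_2$ and $\|V^\epsilon \hat{w} - V V^T x\|_2 \le \frac{4c}{1 - 2c}\|x\|_2$. -/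
open Matrix

/-- The ℓ²-operator norm of a rectangular real matrix. -/
noncomputable def matOpNorm {m k : ℕ} (A : Matrix (Fin m) (Fin k) ℝ) : ℝ :=
  ‖LinearMap.toContinuousLinearMap (Matrix.toEuclideanLin A)‖

/-- The Euclidean norm of a finitely-indexed real vector. -/
noncomputable def vecNorm {m : ℕ} (x : Fin m → ℝ) : ℝ :=
  Real.sqrt (∑ i, (x i) ^ 2)

noncomputable def toE {m : ℕ} (x : Fin m → ℝ) : EuclideanSpace ℝ (Fin m) :=
  (WithLp.equiv 2 (Fin m → ℝ)).symm x

lemma vecNorm_eq {m : ℕ} (x : Fin m → ℝ) : vecNorm x = ‖toE x‖ := by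
  rw [EuclideanSpace.norm_eq]
  simp [vecNorm, toE, Real.norm_eq_abs, sq_abs]

lemma inner_toE {m : ℕ} (x y : Fin m → ℝ) : inner ℝ (toE x) (toE y) = x ⬝ᵥ y := by
  simp [toE, PiLp.inner_apply, dotProduct, RCLike.inner_apply, mul_comm]

lemma vecNorm_nonneg {m : ℕ} (x : Fin m → ℝ) : 0 ≤ vecNorm x := by
  rw [vecNorm_eq]; exact norm_nonneg _

lemma vecNorm_sq {m : ℕ} (x : Fin m → ℝ) : vecNorm x ^ 2 = x ⬝ᵥ x := by
  rw [vecNorm_eq, ← inner_toE, real_inner_self_eq_norm_sq]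

lemma vecNorm_mulVec_le {m k : ℕ} (A : Matrix (Fin m) (Fin k) ℝ) (w : Fin k → ℝ) :
    vecNorm (A.mulVec w) ≤ matOpNorm A * vecNorm w := by
  rw [vecNorm_eq, vecNorm_eq]
  have h := (LinearMap.toContinuousLinearMap (Matrix.toEuclideanLin A)).le_opNorm (toE w)
  simpa [toE, Matrix.toEuclideanLin_apply, matOpNorm] using h

lemma dotProduct_le_vecNorm {m : ℕ} (x y : Fin m → ℝ) :
    x ⬝ᵥ y ≤ vecNorm x * vecNorm y := by
  rw [← inner_toE, vecNorm_eq, vecNorm_eq]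
  exact real_inner_le_norm _ _

lemma toE_add {m : ℕ} (x y : Fin m → ℝ) : toE (x + y) = toE x + toE y := rfl

lemma vecNorm_add_le {m : ℕ} (x y : Fin m → ℝ) :
    vecNorm (x + y) ≤ vecNorm x + vecNorm y := by
  rw [vecNorm_eq, vecNorm_eq, vecNorm_eq, toE_add]; exact norm_add_le _ _

lemma vecNorm_neg {m : ℕ} (x : Fin m → ℝ) : vecNorm (-x) = vecNorm x := by
  rw [vecNorm_eq, vecNorm_eq]; exact norm_neg (toE x)

lemma vecNorm_sub_le {m : ℕ} (x y : Fin m → ℝ) :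
    vecNorm (x - y) ≤ vecNorm x + vecNorm y := by
  rw [sub_eq_add_neg]
  exact (vecNorm_add_le x (-y)).trans (by rw [vecNorm_neg])

lemma mulVec_dot {m k : ℕ} (A : Matrix (Fin m) (Fin k) ℝ) (u : Fin k → ℝ) (z : Fin m → ℝ) :
    (A.mulVec u) ⬝ᵥ z = u ⬝ᵥ (Aᵀ.mulVec z) := by
  rw [dotProduct_comm, dotProduct_mulVec, mulVec_transpose, dotProduct_comm]

lemma vecNorm_transpose_mulVec_le {m k : ℕ} (A : Matrix (Fin m) (Fin k) ℝ) (z : Fin m → ℝ) :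
    vecNorm (Aᵀ.mulVec z) ≤ matOpNorm A * vecNorm z := by
  set t := Aᵀ.mulVec z with ht
  have h1 : vecNorm t ^ 2 = z ⬝ᵥ (A.mulVec t) := by
    rw [vecNorm_sq, ht, mulVec_dot, transpose_transpose]
  have h2 : z ⬝ᵥ (A.mulVec t) ≤ vecNorm z * (matOpNorm A * vecNorm t) :=
    (dotProduct_le_vecNorm _ _).trans
      (by gcongr; exacts [vecNorm_nonneg _, vecNorm_mulVec_le A t])
  have h3 := vecNorm_nonneg t
  have h4 := vecNorm_nonneg z
  have h5 : (0:ℝ) ≤ matOpNorm A := norm_nonneg _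
  by_cases h0 : vecNorm t = 0
  · rw [h0]; exact mul_nonneg h5 h4
  · have hpos : 0 < vecNorm t := lt_of_le_of_ne h3 (Ne.symm h0)
    have hle : vecNorm t * vecNorm t ≤ (matOpNorm A * vecNorm z) * vecNorm t := by nlinarith
    exact le_of_mul_le_mul_right hle hpos

lemma vecNorm_pos {m : ℕ} {w : Fin m → ℝ} (hw : w ≠ 0) : 0 < vecNorm w := by
  rw [vecNorm_eq]
  refine norm_pos_iff.mpr fun h => hw ?_
  have := congrArg (WithLp.equiv 2 (Fin m → ℝ)) h
  simpa [toE] using this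

lemma vecNorm_V_iso {m k : ℕ} {V : Matrix (Fin m) (Fin k) ℝ} (hV : Vᵀ * V = 1)
    (w : Fin k → ℝ) : vecNorm (V.mulVec w) = vecNorm w := by
  have hsq : vecNorm (V.mulVec w) ^ 2 = vecNorm w ^ 2 := by
    rw [vecNorm_sq, vecNorm_sq, mulVec_dot, mulVec_mulVec, hV, one_mulVec]
  have := congrArg Real.sqrt hsq
  rwa [Real.sqrt_sq (vecNorm_nonneg _), Real.sqrt_sq (vecNorm_nonneg _)] at this

lemma proj_shrink {m k : ℕ} {V : Matrix (Fin m) (Fin k) ℝ} (hV : Vᵀ * V = 1)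
    (z : Fin m → ℝ) : vecNorm (z - (V * Vᵀ).mulVec z) ≤ vecNorm z := by
  set t := Vᵀ.mulVec z with ht
  have hq : (V * Vᵀ).mulVec z = V.mulVec t := by rw [← mulVec_mulVec]
  have hVt : (V.mulVec t) ⬝ᵥ (V.mulVec t) = t ⬝ᵥ t := by
    rw [mulVec_dot, mulVec_mulVec, hV, one_mulVec]
  have hzq : z ⬝ᵥ (V.mulVec t) = t ⬝ᵥ t := by
    rw [dotProduct_comm, mulVec_dot, ← ht]
  have hqz : (V.mulVec t) ⬝ᵥ z = t ⬝ᵥ t := by rw [dotProduct_comm, hzq]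
  have htt : (0:ℝ) ≤ t ⬝ᵥ t := by rw [← vecNorm_sq]; positivity
  have key : vecNorm (z - (V * Vᵀ).mulVec z) ^ 2 ≤ vecNorm z ^ 2 := by
    rw [vecNorm_sq, vecNorm_sq, hq, sub_dotProduct, dotProduct_sub, dotProduct_sub,
      hVt, hzq, hqz]
    linarith
  nlinarith [vecNorm_nonneg (z - (V * Vᵀ).mulVec z), vecNorm_nonneg z]

/-- The least-squares fit with the quantized design matrix `Vᵉ = V + εE` is a
projection (so does not increase norms) and is close to the projection `V Vᵀ`
onto the original column space. -/
theorem quantized_projection_close {m k : ℕ}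
    (V E : Matrix (Fin m) (Fin k) ℝ) (hV : Vᵀ * V = 1)
    (ε c : ℝ) (hc : matOpNorm (ε • E) ≤ c) (hc2 : c < 1 / 2)
    (x : Fin m → ℝ)
    (Vε : Matrix (Fin m) (Fin k) ℝ) (hVε : Vε = V + ε • E)
    (what : Fin k → ℝ) (hwhat : what = ((Vεᵀ * Vε)⁻¹ * Vεᵀ).mulVec x) :
    vecNorm (Vε.mulVec what) ≤ vecNorm x ∧
    vecNorm (Vε.mulVec what - (V * Vᵀ).mulVec x)
      ≤ 4 * c / (1 - 2 * c) * vecNorm x := by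
  have hc0 : (0:ℝ) ≤ c := le_trans (norm_nonneg _) hc
  have h2c : (0:ℝ) < 1 - 2 * c := by linarith
  set p : Fin m → ℝ := Vε.mulVec what with hp
  set G : Matrix (Fin k) (Fin k) ℝ := Vεᵀ * Vε with hG
  have hEb : ∀ w : Fin k → ℝ, vecNorm ((ε • E).mulVec w) ≤ c * vecNorm w := fun w =>
    (vecNorm_mulVec_le _ w).trans (mul_le_mul_of_nonneg_right hc (vecNorm_nonneg w))
  have hlow : ∀ w : Fin k → ℝ, (1 - c) * vecNorm w ≤ vecNorm (Vε.mulVec w) := by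
    intro w
    have hsplit : V.mulVec w = Vε.mulVec w - (ε • E).mulVec w := by
      rw [hVε, add_mulVec]; abel
    have h1 := vecNorm_sub_le (Vε.mulVec w) ((ε • E).mulVec w)
    rw [← hsplit] at h1
    have h2 := vecNorm_V_iso hV w
    have h3 := hEb w
    linarith [h1, h2 ▸ le_refl (vecNorm (V.mulVec w))]
  have hGpos : G.PosDef := by
    refine Matrix.PosDef.of_dotProduct_mulVec_pos ?_ ?_
    · rw [hG, ← conjTranspose_eq_transpose_of_trivial]
      exact isHermitian_conjTranspose_mul_self Vε
    · intro w hw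
      have hwpos : 0 < vecNorm w := vecNorm_pos hw
      have hVεw : 0 < vecNorm (Vε.mulVec w) := lt_of_lt_of_le (by nlinarith) (hlow w)
      have : star w ⬝ᵥ (G.mulVec w) = (Vε.mulVec w) ⬝ᵥ (Vε.mulVec w) := by
        rw [star_trivial, hG, ← mulVec_mulVec, ← mulVec_dot]
      rw [this, ← vecNorm_sq]
      positivity
  have hdet : IsUnit G.det := isUnit_iff_ne_zero.mpr hGpos.det_pos.ne'
  have hGinv : G * G⁻¹ = 1 := mul_nonsing_inv G hdet
  have hnormal : Vεᵀ.mulVec p = Vεᵀ.mulVec x := by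
    rw [hp, hwhat, mulVec_mulVec, mulVec_mulVec, ← hG, ← Matrix.mul_assoc, hGinv, Matrix.one_mul]
  have hpp : vecNorm p ^ 2 = p ⬝ᵥ x := by
    rw [vecNorm_sq]
    nth_rewrite 1 [hp]
    rw [mulVec_dot, hnormal, ← mulVec_dot, ← hp]
  have hCS : p ⬝ᵥ x ≤ vecNorm p * vecNorm x := dotProduct_le_vecNorm p x
  have h1 : vecNorm p ≤ vecNorm x := by
    by_cases h0 : vecNorm p = 0
    · rw [h0]; exact vecNorm_nonneg x
    · have hpos : 0 < vecNorm p := lt_of_le_of_ne (vecNorm_nonneg p) (Ne.symm h0)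
      nlinarith
  refine ⟨h1, ?_⟩
  set r : Fin m → ℝ := x - p with hr
  have hrz : Vεᵀ.mulVec r = 0 := by rw [hr, mulVec_sub, hnormal, sub_self]
  have hVtr : Vᵀ.mulVec r = -((ε • E)ᵀ.mulVec r) := by
    have hTt : Vεᵀ = Vᵀ + (ε • E)ᵀ := by rw [hVε, transpose_add]
    rw [hTt, add_mulVec] at hrz
    exact eq_neg_of_add_eq_zero_left hrz
  have hVtr_norm : vecNorm (Vᵀ.mulVec r) ≤ c * vecNorm r := by
    rw [hVtr, vecNorm_neg]
    exact (vecNorm_transpose_mulVec_le _ _).trans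
      (mul_le_mul_of_nonneg_right hc (vecNorm_nonneg r))
  have hrn : vecNorm r ≤ 2 * vecNorm x := by
    calc vecNorm r = vecNorm (x - p) := by rw [hr]
      _ ≤ vecNorm x + vecNorm p := vecNorm_sub_le x p
      _ ≤ 2 * vecNorm x := by linarith
  have hwb : (1 - c) * vecNorm what ≤ vecNorm x := le_trans (hlow what) (hp ▸ h1)
  set u : Fin m → ℝ := (ε • E).mulVec what with hu
  have hpu : p = V.mulVec what + u := by rw [hp, hVε, add_mulVec, hu]
  have ha : p - (V * Vᵀ).mulVec p = u - (V * Vᵀ).mulVec u := by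
    rw [hpu, mulVec_add]
    have hfix : (V * Vᵀ).mulVec (V.mulVec what) = V.mulVec what := by
      rw [mulVec_mulVec, Matrix.mul_assoc, hV, Matrix.mul_one]
    rw [hfix]; abel
  have hdecomp : p - (V * Vᵀ).mulVec x
      = (p - (V * Vᵀ).mulVec p) + (V * Vᵀ).mulVec (p - x) := by
    rw [mulVec_sub]; abel
  have bound1 : vecNorm (p - (V * Vᵀ).mulVec p) ≤ c * vecNorm what := by
    rw [ha]
    exact (proj_shrink hV u).trans (hEb what)
  have bound2 : vecNorm ((V * Vᵀ).mulVec (p - x)) ≤ 2 * c * vecNorm x := by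
    have hpx : p - x = -r := by rw [hr]; abel
    rw [hpx, ← mulVec_mulVec, mulVec_neg, mulVec_neg, vecNorm_neg, vecNorm_V_iso hV]
    calc vecNorm (Vᵀ.mulVec r) ≤ c * vecNorm r := hVtr_norm
      _ ≤ 2 * c * vecNorm x := by nlinarith [vecNorm_nonneg r]
  calc vecNorm (p - (V * Vᵀ).mulVec x)
      ≤ vecNorm (p - (V * Vᵀ).mulVec p) + vecNorm ((V * Vᵀ).mulVec (p - x)) := by
        rw [hdecomp]; exact vecNorm_add_le _ _
    _ ≤ c * vecNorm what + 2 * c * vecNorm x := by linarith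
    _ ≤ 4 * c / (1 - 2 * c) * vecNorm x := by
        rw [div_mul_eq_mul_div, le_div_iff₀ h2c]
        nlinarith [mul_le_mul_of_nonneg_left hwb hc0,
          mul_nonneg (mul_nonneg hc0 hc0) (vecNorm_nonneg what),
          mul_nonneg hc0 (vecNorm_nonneg x),
          mul_nonneg (mul_nonneg hc0 hc0) (vecNorm_nonneg x)]
end
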